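/- arXiv:0712.3092 — 11 statements merged into one kernel-verified Lean document; each statement's English description precedes it below -/
import Mathlib

section
/- Let A be a ring, a ∈ A, and let C be the centralizer of a in A. If f(X) is a polynomial with coefficients in C and f(X) = g(X)·(X - a) in A[X] for some g(X) ∈ A[X], then all coefficients of g(X) lie in C. -/
open Polynomial

theorem quotient_coeffs_in_centralizer {A : Type*} [Ring A] (a : A)
    (f g : A[X])
    (hf : ∀ i, f.coeff i * a = a * f.coeff i)
    (hfg : f = g * (X - C a)) :
    ∀ i, g.coeff i * a = a * g.coeff i := by
  have key : ∀ i, g.coeff i = f.coeff (i + 1) + g.coeff (i + 1) * a := by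
    intro i
    rw [hfg, Polynomial.coeff_mul_X_sub_C]
    abel
  suffices h : ∀ n i, g.natDegree + 1 ≤ i + n → g.coeff i * a = a * g.coeff i by
    intro i
    exact h (g.natDegree + 1) i (by omega)
  intro n
  induction n with
  | zero =>
    intro i hi
    rw [g.coeff_eq_zero_of_natDegree_lt (by omega)]
    simp
  | succ n ih =>
    intro i hi
    by_cases hc : g.natDegree < i
    · rw [g.coeff_eq_zero_of_natDegree_lt hc]; simp
    · have h1 := ih (i + 1) (by omega)
      rw [key i, add_mul, mul_add, hf (i + 1), ← mul_assoc, ← h1]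
end

section
/- Let A be a unital ring and a₁, …, aₙ ∈ A. Suppose f(X) ∈ A[X] has all its coefficients commuting with each aₖ, and f(X) = c·(X - a₁)·(X - a₂)⋯(X - aₙ) in A[X]. Then f(X) = c·(X - aₙ)·(X - a₁)⋯(X - aₙ₋₁), i.e., the linear factors may be cyclically permuted. -/
open Polynomial

lemma monic_list_prod_X_sub_C {A : Type*} [Ring A] (l : List A) :
    ((l.map (fun x => X - C x)).prod).Monic := by
  induction l with
  | nil => simp [monic_one]
  | cons b t ih =>
    simpa using (monic_X_sub_C b).mul ih

lemma natDegree_list_prod_X_sub_C {A : Type*} [Ring A] [Nontrivial A] (l : List A) :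
    ((l.map (fun x => X - C x)).prod).natDegree = l.length := by
  induction l with
  | nil => simp
  | cons b t ih =>
    simp only [List.map_cons, List.prod_cons, List.length_cons]
    rw [(monic_X_sub_C b).natDegree_mul (monic_list_prod_X_sub_C t), natDegree_X_sub_C, ih,
      add_comm]

/-- Cyclic permutation of linear factors: if `f = c·(X-a₁)⋯(X-aₙ)` with the `aₖ`
listed as `l ++ [a]`, and all coefficients of `f` commute with every `aₖ`, then
the last factor may be moved to the front. -/
theorem cyclic_permutation_of_factors {A : Type*} [Ring A] (c : A) (l : List A) (a : A)
    (f : A[X])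
    (hcomm : ∀ i, ∀ x ∈ l ++ [a], f.coeff i * x = x * f.coeff i)
    (hsplit : f = C c * ((l ++ [a]).map (fun x => X - C x)).prod) :
    f = C c * (([a] ++ l).map (fun x => X - C x)).prod := by
  nontriviality A
  set P : A[X] := (l.map (fun x => X - C x)).prod with hP
  have hPm : P.Monic := monic_list_prod_X_sub_C l
  have hsplit' : f = C c * P * (X - C a) := by
    simpa [mul_assoc] using hsplit
  -- c commutes with a
  have hca : c * a = a * c := by
    have hc : f.coeff (l.length + 1) = c := by
      have hM : (((l ++ [a]).map (fun x => X - C x)).prod).Monic :=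
        monic_list_prod_X_sub_C (l ++ [a])
      have hd : (((l ++ [a]).map (fun x => X - C x)).prod).natDegree = l.length + 1 := by
        simpa using natDegree_list_prod_X_sub_C (l ++ [a])
      rw [hsplit, coeff_C_mul, ← hd, hM.coeff_natDegree, mul_one]
    rw [← hc]
    exact hcomm _ a (by simp)
  -- f commutes with C a
  have hfa : f * C a = C a * f := by
    ext n
    rw [coeff_mul_C, coeff_C_mul]
    exact hcomm n a (by simp)
  have hfXa : f * (X - C a) = (X - C a) * f := by
    have : f * X = X * f := (commute_X f).symm
    rw [mul_sub, sub_mul, this, hfa]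
  have key : (C c * P * (X - C a)) * (X - C a) = (C c * (X - C a) * P) * (X - C a) := by
    have h1 : (X - C a) * C c = C c * (X - C a) := by
      rw [mul_sub, sub_mul, (commute_X (C c)), ← C_mul, ← C_mul, hca]
    calc (C c * P * (X - C a)) * (X - C a) = f * (X - C a) := by rw [← hsplit']
      _ = (X - C a) * f := hfXa
      _ = (X - C a) * (C c * P * (X - C a)) := by rw [← hsplit']
      _ = (C c * (X - C a) * P) * (X - C a) := by
          rw [← mul_assoc, ← mul_assoc, h1]
  have := (monic_X_sub_C a).isRegular.right key
  rw [hsplit', this]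
  simp [mul_assoc, hP]
end

section
/- In the ring A of upper triangular 2×2 matrices over a nonzero commutative ring K, with a₁ = [[0,0],[0,1]], a₂ = [[0,-1],[0,0]], a₃ = [[1,1],[0,0]], the polynomial X²(X-1) ∈ A[X] splits as (X - a₁)(X - a₂)(X - a₃). -/
open Polynomial Matrix

/-- Splitting of `X²(X-1)` into linear factors with upper-triangular `2×2` matrix
pseudoroots. -/
theorem split_example_triangular {K : Type*} [CommRing K] [Nontrivial K] :
    (X ^ 2 * (X - 1) : (Matrix (Fin 2) (Fin 2) K)[X]) =
      (X - C !![0, 0; 0, 1]) * (X - C !![0, -1; 0, 0]) * (X - C !![1, 1; 0, 0]) := by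
  have h1 : (!![0,0;0,1] + !![0,-1;0,0] + !![1,1;0,0] : Matrix (Fin 2) (Fin 2) K) = 1 := by
    ext i j; fin_cases i <;> fin_cases j <;> simp
  have h12 : (!![0,0;0,1] * !![0,-1;0,0] : Matrix (Fin 2) (Fin 2) K) = 0 := by
    ext i j; fin_cases i <;> fin_cases j <;> simp [Matrix.mul_apply, Fin.sum_univ_two]
  have h13 : (!![0,0;0,1] * !![1,1;0,0] : Matrix (Fin 2) (Fin 2) K) = 0 := by
    ext i j; fin_cases i <;> fin_cases j <;> simp [Matrix.mul_apply, Fin.sum_univ_two]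
  have h23 : (!![0,-1;0,0] * !![1,1;0,0] : Matrix (Fin 2) (Fin 2) K) = 0 := by
    ext i j; fin_cases i <;> fin_cases j <;> simp [Matrix.mul_apply, Fin.sum_univ_two]
  have p2 : (C !![0,0;0,1] : (Matrix (Fin 2) (Fin 2) K)[X]) * X * C !![1,1;0,0] = 0 := by
    rw [mul_assoc, X_mul_C, ← mul_assoc, ← C_mul, h13, C_0, zero_mul]
  have p3 : (C !![0,-1;0,0] : (Matrix (Fin 2) (Fin 2) K)[X]) * X * C !![1,1;0,0] = 0 := by
    rw [mul_assoc, X_mul_C, ← mul_assoc, ← C_mul, h23, C_0, zero_mul]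
  have e1 : ((X : (Matrix (Fin 2) (Fin 2) K)[X]) - C !![0,0;0,1]) * (X - C !![0,-1;0,0])
      = X^2 - C !![0,0;0,1] * X - C !![0,-1;0,0] * X := by
    rw [mul_sub, sub_mul, sub_mul, X_mul_C, ← C_mul, h12, C_0]; noncomm_ring
  have e2 : ((X : (Matrix (Fin 2) (Fin 2) K)[X])^2 - C !![0,0;0,1] * X - C !![0,-1;0,0] * X) * (X - C !![1,1;0,0])
      = X^3 - C (!![0,0;0,1] + !![0,-1;0,0] + !![1,1;0,0]) * X^2 := by
    rw [sub_mul, sub_mul, mul_sub, mul_sub, mul_sub, show ((X:(Matrix (Fin 2) (Fin 2) K)[X])^2 * C !![1,1;0,0]) = C !![1,1;0,0] * X^2 from X_pow_mul, p2, p3, C_add, C_add]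
    noncomm_ring
  rw [e1, e2, h1, C_1, one_mul, mul_sub, mul_one, ← pow_succ]
end

section
/- In the ring of upper triangular 2×2 matrices over a nonzero commutative ring K, the matrices a₁ = [[0,0],[0,1]], a₂ = [[0,-1],[0,0]], a₃ = [[1,1],[0,0]] satisfy [a₁,a₂] = [a₂,a₃] = [a₃,a₁] = -a₂ ≠ 0; in particular no two of them commute. -/
open Matrix

theorem commutators_example_triangular {K : Type*} [CommRing K] [Nontrivial K] :
    let a₁ : Matrix (Fin 2) (Fin 2) K := !![0, 0; 0, 1]
    let a₂ : Matrix (Fin 2) (Fin 2) K := !![0, -1; 0, 0]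
    let a₃ : Matrix (Fin 2) (Fin 2) K := !![1, 1; 0, 0]
    a₁ * a₂ - a₂ * a₁ = -a₂ ∧ a₂ * a₃ - a₃ * a₂ = -a₂ ∧ a₃ * a₁ - a₁ * a₃ = -a₂ ∧
      (-a₂ : Matrix (Fin 2) (Fin 2) K) ≠ 0 := by
  intro a₁ a₂ a₃
  refine ⟨?_, ?_, ?_, ?_⟩
  · ext i j; fin_cases i <;> fin_cases j <;> simp [a₁, a₂, Matrix.mul_apply, Fin.sum_univ_two]
  · ext i j; fin_cases i <;> fin_cases j <;> simp [a₂, a₃, Matrix.mul_apply, Fin.sum_univ_two]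
  · ext i j; fin_cases i <;> fin_cases j <;> simp [a₁, a₂, a₃, Matrix.mul_apply, Fin.sum_univ_two]
  · intro h
    have := congrFun (congrFun h 0) 1
    simp [a₂] at this
end

section
/- In the ring A of 3×3 matrices over a nonzero commutative ring K, with a₁ = [[0,2,0],[0,0,2],[1,0,0]], a₂ = [[0,-1,0],[0,0,2],[-2,0,0]], a₃ = [[0,-1,0],[0,0,-4],[1,0,0]], the polynomial X³ - 4 ∈ A[X] splits as (X - a₁)(X - a₂)(X - a₃). -/
open Polynomial Matrix

lemma cubic_expand {A : Type*} [Ring A] (a b c : A) :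
    (X - C a) * (X - C b) * (X - C c) =
      X ^ 3 - C (a + b + c) * X ^ 2 + C (a * b + a * c + b * c) * X - C (a * b * c) := by
  have hmul : ∀ (x : A) (p : A[X]), X * (C x * p) = C x * (X * p) := fun x p => by
    rw [← mul_assoc, X_mul_C, mul_assoc]
  simp only [sub_mul, mul_sub, C_add, C_mul, add_mul, mul_assoc, X_mul_C, hmul]
  noncomm_ring

theorem split_example_M3 {K : Type*} [CommRing K] [Nontrivial K] :
    (X ^ 3 - 4 : (Matrix (Fin 3) (Fin 3) K)[X]) =
      (X - C !![0, 2, 0; 0, 0, 2; 1, 0, 0]) *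
      (X - C !![0, -1, 0; 0, 0, 2; -2, 0, 0]) *
      (X - C !![0, -1, 0; 0, 0, -4; 1, 0, 0]) := by
  rw [cubic_expand]
  have h1 : (!![0, 2, 0; 0, 0, 2; 1, 0, 0] + !![0, -1, 0; 0, 0, 2; -2, 0, 0] +
      !![0, -1, 0; 0, 0, -4; 1, 0, 0] : Matrix (Fin 3) (Fin 3) K) = 0 := by
    ext i j; fin_cases i <;> fin_cases j <;> simp [Matrix.vecHead, Matrix.vecTail] <;> ring
  have h2 : (!![0, 2, 0; 0, 0, 2; 1, 0, 0] * !![0, -1, 0; 0, 0, 2; -2, 0, 0] +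
      !![0, 2, 0; 0, 0, 2; 1, 0, 0] * !![0, -1, 0; 0, 0, -4; 1, 0, 0] +
      !![0, -1, 0; 0, 0, 2; -2, 0, 0] * !![0, -1, 0; 0, 0, -4; 1, 0, 0] :
      Matrix (Fin 3) (Fin 3) K) = 0 := by
    ext i j
    fin_cases i <;> fin_cases j <;>
      simp [Matrix.mul_apply, Fin.sum_univ_succ, Matrix.vecHead, Matrix.vecTail] <;> ring
  have h3 : (!![0, 2, 0; 0, 0, 2; 1, 0, 0] * !![0, -1, 0; 0, 0, 2; -2, 0, 0] *
      !![0, -1, 0; 0, 0, -4; 1, 0, 0] : Matrix (Fin 3) (Fin 3) K) = 4 := by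
    ext i j
    fin_cases i <;> fin_cases j <;>
      simp [Matrix.mul_apply, Fin.sum_univ_succ, ← Matrix.diagonal_ofNat,
        Matrix.diagonal_apply] <;> norm_num
  rw [h1, h3]
  rw [show (!![0, 2, 0; 0, 0, 2; 1, 0, 0] * !![0, -1, 0; 0, 0, 2; -2, 0, 0] +
      !![0, 2, 0; 0, 0, 2; 1, 0, 0] * !![0, -1, 0; 0, 0, -4; 1, 0, 0] +
      !![0, -1, 0; 0, 0, 2; -2, 0, 0] * !![0, -1, 0; 0, 0, -4; 1, 0, 0] :
      Matrix (Fin 3) (Fin 3) K) = 0 from h2]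
  simp [map_ofNat]
end

section
/- In M₃(K) over a commutative ring K in which 3 ≠ 0, the matrices a₁ = [[0,2,0],[0,0,2],[1,0,0]], a₂ = [[0,-1,0],[0,0,2],[-2,0,0]], a₃ = [[0,-1,0],[0,0,-4],[1,0,0]] satisfy [a₁,a₂] = [a₂,a₃] = [a₃,a₁] = [[0,0,6],[-6,0,0],[0,3,0]] ≠ 0. -/
open Matrix

theorem commutators_example_M3 {K : Type*} [CommRing K] (h3 : (3 : K) ≠ 0) :
    let a₁ : Matrix (Fin 3) (Fin 3) K := !![0, 2, 0; 0, 0, 2; 1, 0, 0]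
    let a₂ : Matrix (Fin 3) (Fin 3) K := !![0, -1, 0; 0, 0, 2; -2, 0, 0]
    let a₃ : Matrix (Fin 3) (Fin 3) K := !![0, -1, 0; 0, 0, -4; 1, 0, 0]
    let c : Matrix (Fin 3) (Fin 3) K := !![0, 0, 6; -6, 0, 0; 0, 3, 0]
    a₁ * a₂ - a₂ * a₁ = c ∧ a₂ * a₃ - a₃ * a₂ = c ∧ a₃ * a₁ - a₁ * a₃ = c ∧ c ≠ 0 := by
  refine ⟨?_, ?_, ?_, ?_⟩
  · simp only [Matrix.mul_fin_three]
    norm_num [Matrix.ext_iff.symm, Fin.forall_fin_succ, Matrix.sub_apply]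
  · simp only [Matrix.mul_fin_three]
    norm_num [Matrix.ext_iff.symm, Fin.forall_fin_succ, Matrix.sub_apply]
  · simp only [Matrix.mul_fin_three]
    norm_num [Matrix.ext_iff.symm, Fin.forall_fin_succ, Matrix.sub_apply]
  · intro h
    have := congrArg (fun m => m 2 1) h
    simp at this
    exact h3 this
end

section
/- Over a nonzero commutative ring K, with a₁ = [[0,2,0],[0,0,2],[1,0,0]], a₂ = [[0,-1,0],[0,0,2],[-2,0,0]], a₃ = [[0,-1,0],[0,0,-4],[1,0,0]] in M₃(K), one also has (X - a₃)(X - a₁)(X - a₂) = X³ - 4 and (X - a₂)(X - a₃)(X - a₁) = X³ - 4 in M₃(K)[X]. -/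
open Polynomial Matrix

lemma split_aux {R : Type*} [Ring R] (A B Cm : R)
    (h1 : A + B + Cm = 0) (h2 : A * B + (A + B) * Cm = 0) (h3 : A * B * Cm = 4) :
    (X - C A) * (X - C B) * (X - C Cm) = (X ^ 3 - 4 : R[X]) := by
  have key : (X - C A) * (X - C B) * (X - C Cm)
      = X^3 - C (A+B+Cm) * X^2 + C (A*B + (A+B)*Cm) * X - C (A*B*Cm) := by
    simp only [map_add, _root_.map_mul, sub_mul, mul_sub, add_mul, mul_assoc, ← pow_two, ← pow_succ]
    simp only [← mul_assoc, X_mul_C]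
    simp only [mul_assoc, ← pow_two, X_pow_mul, X_mul_C]
    abel
  rw [key, h1, h2, h3]
  simp only [map_zero, zero_mul, sub_zero, add_zero]
  rw [show (C 4 : R[X]) = 4 from map_ofNat C 4]

set_option maxHeartbeats 2000000 in
theorem cyclic_splittings_M3 {K : Type*} [CommRing K] [Nontrivial K] :
    let a₁ : (Matrix (Fin 3) (Fin 3) K)[X] := X - C !![0, 2, 0; 0, 0, 2; 1, 0, 0]
    let a₂ : (Matrix (Fin 3) (Fin 3) K)[X] := X - C !![0, -1, 0; 0, 0, 2; -2, 0, 0]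
    let a₃ : (Matrix (Fin 3) (Fin 3) K)[X] := X - C !![0, -1, 0; 0, 0, -4; 1, 0, 0]
    a₃ * a₁ * a₂ = X ^ 3 - 4 ∧ a₂ * a₃ * a₁ = X ^ 3 - 4 := by
  intro a₁ a₂ a₃
  constructor <;>
  · refine split_aux _ _ _ ?_ ?_ ?_ <;>
    · ext i j
      fin_cases i <;> fin_cases j <;>
        norm_num [Matrix.mul_apply, Fin.sum_univ_three, Matrix.ofNat_fin_three,
          Matrix.vecHead, Matrix.vecTail, Matrix.cons_val_two, Matrix.cons_val_one, Matrix.cons_val_zero]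
end

section
/- Let K be a commutative ring in which 2 and 3 are not zero divisors. Then a 3×3 matrix over K commutes with all three of a₁ = [[0,2,0],[0,0,2],[1,0,0]], a₂ = [[0,-1,0],[0,0,2],[-2,0,0]], a₃ = [[0,-1,0],[0,0,-4],[1,0,0]] if and only if it is a scalar matrix α·1 for some α ∈ K. -/
open Matrix

theorem joint_centralizer_M3 {K : Type*} [CommRing K]
    (h2 : ∀ x : K, 2 * x = 0 → x = 0) (h3 : ∀ x : K, 3 * x = 0 → x = 0) :
    let a₁ : Matrix (Fin 3) (Fin 3) K := !![0, 2, 0; 0, 0, 2; 1, 0, 0]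
    let a₂ : Matrix (Fin 3) (Fin 3) K := !![0, -1, 0; 0, 0, 2; -2, 0, 0]
    let a₃ : Matrix (Fin 3) (Fin 3) K := !![0, -1, 0; 0, 0, -4; 1, 0, 0]
    ∀ x : Matrix (Fin 3) (Fin 3) K,
      (x * a₁ = a₁ * x ∧ x * a₂ = a₂ * x ∧ x * a₃ = a₃ * x) ↔
        ∃ α : K, x = α • (1 : Matrix (Fin 3) (Fin 3) K) := by
  intro a₁ a₂ a₃ x
  constructor
  · rintro ⟨e1, e2, e3⟩
    have A00 := congrFun (congrFun e1 0) 0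
    have A01 := congrFun (congrFun e1 0) 1
    have A02 := congrFun (congrFun e1 0) 2
    have A21 := congrFun (congrFun e1 2) 1
    have A22 := congrFun (congrFun e1 2) 2
    have A20 := congrFun (congrFun e1 2) 0
    have B02 := congrFun (congrFun e2 0) 2
    have C00 := congrFun (congrFun e3 0) 0
    simp [a₁, a₂, a₃, Matrix.mul_apply, Fin.sum_univ_three, Matrix.vecHead, Matrix.vecTail, Function.comp] at A00 A01 A02 A21 A22 A20 B02 C00
    have h10 : x 1 0 = 0 := h3 _ (by linear_combination C00 - A00)
    have h02 : x 0 2 = 0 := by linear_combination A00 + 2 * h10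
    have h01 : x 0 1 = 0 := h2 _ (h3 _ (by linear_combination 2 * B02 + A02))
    have h12 : x 1 2 = 0 := by linear_combination B02 - 2 * h01
    have h20 : x 2 0 = 0 := h2 _ (by linear_combination A21 + h01)
    have h21 : x 2 1 = 0 := h2 _ (by linear_combination A22 + h02)
    have h11 : x 1 1 = x 0 0 := by
      have d : x 1 1 - x 0 0 = 0 := h2 _ (by linear_combination -A01)
      linear_combination d
    have h22 : x 2 2 = x 0 0 := by linear_combination A20
    refine ⟨x 0 0, ?_⟩
    ext i j
    fin_cases i <;> fin_cases j <;>
      simp [Matrix.one_apply, h01, h02, h10, h12, h20, h21, h11, h22]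
  · rintro ⟨α, rfl⟩
    refine ⟨?_, ?_, ?_⟩ <;> simp [smul_mul_assoc, mul_smul_comm]
end

section
/- Let K be a commutative ring in which 2, 3, 5 and 7 are invertible. Then the matrices a₁ = [[0,2,0],[0,0,2],[1,0,0]], a₂ = [[0,-1,0],[0,0,2],[-2,0,0]], a₃ = [[0,-1,0],[0,0,-4],[1,0,0]] generate M₃(K) as a K-algebra. -/
open Matrix

private lemma unit_smul_mem' {K : Type*} [CommRing K] {R : Type*} [Ring R] [Algebra K R]
    {A : Subalgebra K R} {c : K} (hc : IsUnit c) {x : R} (h : c • x ∈ A) : x ∈ A := by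
  have := A.smul_mem h (↑hc.unit⁻¹)
  rwa [smul_smul, IsUnit.val_inv_mul, one_smul] at this

set_option maxHeartbeats 3200000 in
theorem roots_generate_M3 {K : Type*} [CommRing K]
    (h2 : IsUnit (2 : K)) (h3 : IsUnit (3 : K)) (h5 : IsUnit (5 : K))
    (h7 : IsUnit (7 : K)) :
    Algebra.adjoin K {(!![0, 2, 0; 0, 0, 2; 1, 0, 0] : Matrix (Fin 3) (Fin 3) K),
        !![0, -1, 0; 0, 0, 2; -2, 0, 0], !![0, -1, 0; 0, 0, -4; 1, 0, 0]} = ⊤ := by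
  set a1 : Matrix (Fin 3) (Fin 3) K := !![0, 2, 0; 0, 0, 2; 1, 0, 0] with ha1def
  set a2 : Matrix (Fin 3) (Fin 3) K := !![0, -1, 0; 0, 0, 2; -2, 0, 0] with ha2def
  set A := Algebra.adjoin K {a1, a2, (!![0, -1, 0; 0, 0, -4; 1, 0, 0] : Matrix (Fin 3) (Fin 3) K)}
  have h18 : IsUnit (18 : K) := by
    have := h2.mul (h3.mul h3); norm_num at this; exact this
  have h9 : IsUnit (9 : K) := by
    have := h3.mul h3; norm_num at this; exact this
  have ha1 : a1 ∈ A := Algebra.subset_adjoin (by left; rfl)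
  have ha2 : a2 ∈ A := Algebra.subset_adjoin (by right; left; rfl)
  -- basis matrices
  have key : ∀ i j : Fin 3, (single i j (1 : K)) ∈ A := by
    have he02 : (!![0,0,1;0,0,0;0,0,0] : Matrix (Fin 3) (Fin 3) K) ∈ A := by
      apply unit_smul_mem' h18
      have : (18 : K) • (!![0,0,1;0,0,0;0,0,0] : Matrix (Fin 3) (Fin 3) K)
          = (3 : K) • (a1*a1) + (2 : K) • (a1*a2) + a2*a1 := by
        simp only [ha1def, ha2def, Matrix.mul_fin_three]
        ext i j
        fin_cases i <;> fin_cases j <;> simp [Matrix.vecHead, Matrix.vecTail] <;> ring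
      rw [this]
      exact A.add_mem (A.add_mem (A.smul_mem (A.mul_mem ha1 ha1) _)
        (A.smul_mem (A.mul_mem ha1 ha2) _)) (A.mul_mem ha2 ha1)
    have he10 : (!![0,0,0;1,0,0;0,0,0] : Matrix (Fin 3) (Fin 3) K) ∈ A := by
      apply unit_smul_mem' h18
      have : (18 : K) • (!![0,0,0;1,0,0;0,0,0] : Matrix (Fin 3) (Fin 3) K)
          = (3 : K) • (a1*a1) + (-2 : K) • (a1*a2) + (2 : K) • (a2*a1) := by
        simp only [ha1def, ha2def, Matrix.mul_fin_three]
        ext i j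
        fin_cases i <;> fin_cases j <;> simp [Matrix.vecHead, Matrix.vecTail] <;> ring
      rw [this]
      exact A.add_mem (A.add_mem (A.smul_mem (A.mul_mem ha1 ha1) _)
        (A.smul_mem (A.mul_mem ha1 ha2) _)) (A.smul_mem (A.mul_mem ha2 ha1) _)
    have he21 : (!![0,0,0;0,0,0;0,1,0] : Matrix (Fin 3) (Fin 3) K) ∈ A := by
      apply unit_smul_mem' h9
      have : (9 : K) • (!![0,0,0;0,0,0;0,1,0] : Matrix (Fin 3) (Fin 3) K)
          = (-1 : K) • (a1*a2) + (-2 : K) • (a2*a1) := by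
        simp only [ha1def, ha2def, Matrix.mul_fin_three]
        ext i j
        fin_cases i <;> fin_cases j <;> simp [Matrix.vecHead, Matrix.vecTail] <;> ring
      rw [this]
      exact A.add_mem (A.smul_mem (A.mul_mem ha1 ha2) _) (A.smul_mem (A.mul_mem ha2 ha1) _)
    have he00 : (!![1,0,0;0,0,0;0,0,0] : Matrix (Fin 3) (Fin 3) K) ∈ A := by
      have : (!![1,0,0;0,0,0;0,0,0] : Matrix (Fin 3) (Fin 3) K)
          = !![0,0,1;0,0,0;0,0,0] * a1 := by
        simp only [ha1def, Matrix.mul_fin_three]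
        ext i j
        fin_cases i <;> fin_cases j <;> simp [Matrix.vecHead, Matrix.vecTail] <;> ring
      rw [this]; exact A.mul_mem he02 ha1
    have he11 : (!![0,0,0;0,1,0;0,0,0] : Matrix (Fin 3) (Fin 3) K) ∈ A := by
      apply unit_smul_mem' h2
      have : (2 : K) • (!![0,0,0;0,1,0;0,0,0] : Matrix (Fin 3) (Fin 3) K)
          = !![0,0,0;1,0,0;0,0,0] * a1 := by
        simp only [ha1def, Matrix.mul_fin_three]
        ext i j
        fin_cases i <;> fin_cases j <;> simp [Matrix.vecHead, Matrix.vecTail] <;> ring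
      rw [this]; exact A.mul_mem he10 ha1
    have he22 : (!![0,0,0;0,0,0;0,0,1] : Matrix (Fin 3) (Fin 3) K) ∈ A := by
      apply unit_smul_mem' h2
      have : (2 : K) • (!![0,0,0;0,0,0;0,0,1] : Matrix (Fin 3) (Fin 3) K)
          = !![0,0,0;0,0,0;0,1,0] * a1 := by
        simp only [ha1def, Matrix.mul_fin_three]
        ext i j
        fin_cases i <;> fin_cases j <;> simp [Matrix.vecHead, Matrix.vecTail] <;> ring
      rw [this]; exact A.mul_mem he21 ha1
    have he01 : (!![0,1,0;0,0,0;0,0,0] : Matrix (Fin 3) (Fin 3) K) ∈ A := by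
      apply unit_smul_mem' h2
      have : (2 : K) • (!![0,1,0;0,0,0;0,0,0] : Matrix (Fin 3) (Fin 3) K)
          = !![1,0,0;0,0,0;0,0,0] * a1 := by
        simp only [ha1def, Matrix.mul_fin_three]
        ext i j
        fin_cases i <;> fin_cases j <;> simp [Matrix.vecHead, Matrix.vecTail] <;> ring
      rw [this]; exact A.mul_mem he00 ha1
    have he12 : (!![0,0,0;0,0,1;0,0,0] : Matrix (Fin 3) (Fin 3) K) ∈ A := by
      apply unit_smul_mem' h2
      have : (2 : K) • (!![0,0,0;0,0,1;0,0,0] : Matrix (Fin 3) (Fin 3) K)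
          = !![0,0,0;0,1,0;0,0,0] * a1 := by
        simp only [ha1def, Matrix.mul_fin_three]
        ext i j
        fin_cases i <;> fin_cases j <;> simp [Matrix.vecHead, Matrix.vecTail] <;> ring
      rw [this]; exact A.mul_mem he11 ha1
    have he20 : (!![0,0,0;0,0,0;1,0,0] : Matrix (Fin 3) (Fin 3) K) ∈ A := by
      have : (!![0,0,0;0,0,0;1,0,0] : Matrix (Fin 3) (Fin 3) K)
          = !![0,0,0;0,0,0;0,0,1] * a1 := by
        simp only [ha1def, Matrix.mul_fin_three]
        ext i j
        fin_cases i <;> fin_cases j <;> simp [Matrix.vecHead, Matrix.vecTail] <;> ring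
      rw [this]; exact A.mul_mem he22 ha1
    intro i j
    fin_cases i <;> fin_cases j <;>
      [ (convert he00); (convert he01); (convert he02);
        (convert he10); (convert he11); (convert he12);
        (convert he20); (convert he21); (convert he22) ] <;>
      · ext i j
        fin_cases i <;> fin_cases j <;>
          simp [Matrix.single, Matrix.vecHead, Matrix.vecTail]
  rw [eq_top_iff]
  intro m _
  rw [matrix_eq_sum_single m]
  refine Subalgebra.sum_mem A fun i _ => Subalgebra.sum_mem A fun j _ => ?_
  rw [show single i j (m i j) = (m i j) • single i j (1 : K) by
    rw [Matrix.smul_single, smul_eq_mul, mul_one]]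
  exact A.smul_mem (key i j) _
end

section
/- Let A be a unital ring, a₁, …, aₙ ∈ A, and let C denote the subring of elements of A commuting with all aₖ. If f(X) ∈ C[X] splits in A[X] as f(X) = c·(X - a₁)⋯(X - aₙ), then the substitution maps X ↦ aₖ define a ring homomorphism C[X]/(f(X)) → A^n, x ↦ (eval_{a₁}(x), …, eval_{aₙ}(x)). -/
open Polynomial

section Aux

variable {A : Type*} [Ring A]

/-- Product of linear factors `X - C b` over a list. -/
noncomputable def Pl (L : List A) : A[X] := (L.map fun b => X - C b).prod

/-- Product of reflected linear factors `1 - C b * X` over a list. -/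
noncomputable def Ql (L : List A) : A[X] := (L.map fun b => 1 - C b * X).prod

lemma Pl_nil : Pl ([] : List A) = 1 := rfl

lemma Pl_cons (b : A) (L : List A) : Pl (b :: L) = (X - C b) * Pl L := by
  simp [Pl]

lemma Ql_nil : Ql ([] : List A) = 1 := rfl

lemma Ql_cons (b : A) (L : List A) : Ql (b :: L) = (1 - C b * X) * Ql L := by
  simp [Ql]

lemma Pl_append (L₁ L₂ : List A) : Pl (L₁ ++ L₂) = Pl L₁ * Pl L₂ := by
  simp [Pl]

lemma Pl_monic (L : List A) : (Pl L).Monic := by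
  induction L with
  | nil => simpa [Pl_nil] using monic_one
  | cons b L ih => rw [Pl_cons]; exact (monic_X_sub_C b).mul ih

lemma Pl_natDegree_le (L : List A) : (Pl L).natDegree ≤ L.length := by
  induction L with
  | nil => simp [Pl_nil]
  | cons b L ih =>
    rw [Pl_cons]
    refine le_trans natDegree_mul_le ?_
    have h1 := natDegree_X_sub_C_le b
    simp only [List.length_cons]
    omega

lemma Pl_coeff_length (L : List A) : (Pl L).coeff L.length = 1 := by
  induction L with
  | nil => simp [Pl_nil]
  | cons b L ih =>
    have hz : (Pl L).coeff (L.length + 1) = 0 :=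
      coeff_eq_zero_of_natDegree_lt (lt_of_le_of_lt (Pl_natDegree_le L) (Nat.lt_succ_self _))
    rw [Pl_cons]
    simp only [List.length_cons]
    rw [sub_mul, coeff_sub, coeff_X_mul, coeff_C_mul, ih, hz, mul_zero, sub_zero]

lemma Ql_natDegree_le (L : List A) : (Ql L).natDegree ≤ L.length := by
  induction L with
  | nil => simp [Ql_nil]
  | cons b L ih =>
    rw [Ql_cons]
    refine le_trans (natDegree_mul_le) ?_
    have h1 : (1 - C b * X : A[X]).natDegree ≤ 1 := by
      refine le_trans (natDegree_sub_le _ _) ?_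
      simp only [natDegree_one, max_le_iff]
      exact ⟨Nat.zero_le _, le_trans (natDegree_C_mul_le _ _) natDegree_X_le⟩
    simp only [List.length_cons]
    omega

lemma Ql_coeff_zero (L : List A) : (Ql L).coeff 0 = 1 := by
  induction L with
  | nil => simp [Ql_nil]
  | cons b L ih =>
    rw [Ql_cons, mul_coeff_zero, ih]
    simp

lemma reflect_one_X_sub_C (b : A) : reflect 1 (X - C b) = 1 - C b * X := by
  have h1 : reflect 1 (X : A[X]) = 1 := by
    have := reflect_monomial 1 1 (R := A)
    simpa [revAt_le] using this
  have h2 : reflect 1 (C b : A[X]) = C b * X := by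
    have := reflect_C_mul_X_pow 1 0 (c := b)
    simpa [revAt_le] using this
  have hsub : reflect 1 (X - C b : A[X]) = reflect 1 (X : A[X]) - reflect 1 (C b : A[X]) := by
    ext i
    simp [coeff_reflect, coeff_sub]
  rw [hsub, h1, h2]

lemma reflect_one_one_sub_C_mul_X (b : A) : reflect 1 (1 - C b * X) = X - C b := by
  have h1 : reflect 1 (1 : A[X]) = X := by
    have := reflect_C_mul_X_pow 1 0 (c := (1 : A))
    simpa [revAt_le] using this
  have h2 : reflect 1 (C b * X : A[X]) = C b := by
    have := reflect_C_mul_X_pow 1 1 (c := b)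
    simpa [revAt_le] using this
  have hsub : reflect 1 ((1 : A[X]) - C b * X) =
      reflect 1 (1 : A[X]) - reflect 1 (C b * X : A[X]) := by
    ext i
    simp [coeff_reflect, coeff_sub]
  rw [hsub, h1, h2]

lemma reflect_reflect (N : ℕ) (p : A[X]) : reflect N (reflect N p) = p := by
  ext i
  simp [coeff_reflect, revAt_invol]

lemma reflect_Pl (L : List A) : reflect L.length (Pl L) = Ql L := by
  induction L with
  | nil =>
    rw [Pl_nil, Ql_nil]
    ext i
    rw [coeff_reflect]
    rcases i with _ | i
    · simp
    · rw [revAt_eq_self_of_lt (by simp)]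
  | cons b L ih =>
    rw [Pl_cons, Ql_cons]
    have hlen : (b :: L).length = 1 + L.length := by simp [Nat.add_comm]
    rw [hlen, reflect_mul (X - C b) (Pl L) (natDegree_X_sub_C_le b)
        (Pl_natDegree_le L), reflect_one_X_sub_C, ih]

/-- coefficientwise commutation gives polynomial commutation -/
lemma poly_mul_comm (p q : A[X]) (H : ∀ i j, Commute (p.coeff i) (q.coeff j)) :
    p * q = q * p := by
  ext m
  rw [coeff_mul, coeff_mul]
  conv_rhs => rw [← Finset.HasAntidiagonal.map_swap_antidiagonal (n := m)]
  rw [Finset.sum_map]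
  refine Finset.sum_congr rfl fun x _ => ?_
  simpa using (H x.1 x.2).eq

lemma commute_coeff_Ql {z : A} {L : List A} (h : ∀ b ∈ L, Commute z b) :
    ∀ j, Commute z ((Ql L).coeff j) := by
  induction L with
  | nil =>
    intro j
    rcases j with _ | j
    · rw [Ql_nil, coeff_one]; simpa using Commute.one_right z
    · rw [Ql_nil, coeff_one]; simpa using Commute.zero_right z
  | cons b L ih =>
    intro j
    have hb : Commute z b := h b List.mem_cons_self
    have hL : ∀ b ∈ L, Commute z b := fun x hx => h x (List.mem_cons_of_mem _ hx)
    rw [Ql_cons, sub_mul, one_mul]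
    rw [coeff_sub]
    refine Commute.sub_right (ih hL j) ?_
    rw [mul_assoc]
    rcases j with _ | j
    · rw [coeff_C_mul]
      have : (X * Ql L).coeff 0 = 0 := by
        rw [mul_coeff_zero]; simp
      rw [this, mul_zero]
      exact Commute.zero_right z
    · rw [coeff_C_mul, coeff_X_mul]
      exact hb.mul_right (ih hL j)

/-- right cancellation by a polynomial with constant coefficient 1 -/
lemma mul_right_cancel_of_coeff_zero_one {g p q : A[X]} (hg : g.coeff 0 = 1)
    (h : p * g = q * g) : p = q := by
  have hd : (p - q) * g = 0 := by rw [sub_mul, h, sub_self]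
  have key : ∀ n, (p - q).coeff n = 0 := by
    intro n
    induction n using Nat.strong_induction_on with
    | _ n ih =>
      have h0 : ((p - q) * g).coeff n = 0 := by rw [hd, coeff_zero]
      rw [coeff_mul, Finset.sum_eq_single (n, 0)] at h0
      · simpa [hg] using h0
      · intro x hx hne
        have hx' : x.1 + x.2 = n := Finset.HasAntidiagonal.mem_antidiagonal.mp hx
        have hlt : x.1 < n := by
          by_contra h'
          push_neg at h'
          apply hne
          obtain ⟨x1, x2⟩ := x
          simp only [Prod.mk.injEq]
          omega
        rw [ih x.1 hlt, zero_mul]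
      · intro hn
        exact absurd (Finset.HasAntidiagonal.mem_antidiagonal.mpr (by simp)) hn
  have hpq : p - q = 0 := by ext n; simp [key n]
  exact sub_eq_zero.mp hpq

/-- Key lemma: if the coefficients of `C c * Pl (l₁ ++ t :: l₂)` commute with every element
of the list, then `t` is a root. -/
theorem key_eval_zero (c t : A) (l₁ l₂ : List A)
    (hF : ∀ i, ∀ b ∈ l₁ ++ t :: l₂, Commute ((C c * Pl (l₁ ++ t :: l₂)).coeff i) b) :
    (C c * Pl (l₁ ++ t :: l₂)).eval t = 0 := by
  set L := l₁ ++ t :: l₂ with hL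
  set F := C c * Pl L with hFdef
  set n := L.length with hn
  -- c commutes with every element of L
  have hcn : F.coeff n = c := by
    rw [hFdef, coeff_C_mul, hn, Pl_coeff_length, mul_one]
  have hc : ∀ b ∈ L, Commute c b := by
    intro b hb
    have := hF n b hb
    rwa [hcn] at this
  -- split the product
  have hsplitP : Pl L = Pl l₁ * ((X - C t) * Pl l₂) := by
    rw [hL, Pl_append]
    congr 1
  have hlen : n = l₁.length + (1 + l₂.length) := by
    simp [hn, hL, Nat.add_comm]
  -- reflect
  have hrefl : reflect n F = C c * (Ql l₁ * ((1 - C t * X) * Ql l₂)) := by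
    rw [hFdef, reflect_C_mul, hsplitP, hlen]
    rw [reflect_mul (Pl l₁) ((X - C t) * Pl l₂) (Pl_natDegree_le l₁)
      (by
        refine le_trans natDegree_mul_le ?_
        have h1 := natDegree_X_sub_C_le t
        have h2 := Pl_natDegree_le l₂
        omega)]
    rw [reflect_mul (X - C t) (Pl l₂) (natDegree_X_sub_C_le t) (Pl_natDegree_le l₂)]
    rw [reflect_Pl, reflect_Pl, reflect_one_X_sub_C]
  -- commutation of reflect n F with Ql l₂
  have hmemL₂ : ∀ b ∈ l₂, b ∈ L := by
    intro b hb
    rw [hL]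
    exact List.mem_append_right _ (List.mem_cons_of_mem _ hb)
  have h1 : reflect n F * Ql l₂ = Ql l₂ * reflect n F := by
    refine poly_mul_comm _ _ ?_
    intro i j
    rw [coeff_reflect]
    exact commute_coeff_Ql (fun b hb => hF (revAt n i) b (hmemL₂ b hb)) j
  -- commutation of C c with Ql l₂
  have h2 : (C c : A[X]) * Ql l₂ = Ql l₂ * C c := by
    refine poly_mul_comm _ _ ?_
    intro i j
    rcases eq_or_ne i 0 with hi | hi
    · subst hi
      rw [coeff_C_zero]
      exact commute_coeff_Ql (fun b hb => hc b (hmemL₂ b hb)) j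
    · rw [coeff_C, if_neg hi]
      exact Commute.zero_left _
  -- move Ql l₂ to the front
  have h3 : reflect n F * Ql l₂ = (C c * (Ql l₂ * (Ql l₁ * (1 - C t * X)))) * Ql l₂ := by
    rw [h1, hrefl]
    calc Ql l₂ * (C c * (Ql l₁ * ((1 - C t * X) * Ql l₂)))
        = (Ql l₂ * C c) * (Ql l₁ * ((1 - C t * X) * Ql l₂)) := (mul_assoc _ _ _).symm
      _ = (C c * Ql l₂) * (Ql l₁ * ((1 - C t * X) * Ql l₂)) := by rw [← h2]
      _ = (C c * (Ql l₂ * (Ql l₁ * (1 - C t * X)))) * Ql l₂ := by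
          simp only [mul_assoc]
  have h4 : reflect n F = C c * (Ql l₂ * (Ql l₁ * (1 - C t * X))) :=
    mul_right_cancel_of_coeff_zero_one (Ql_coeff_zero l₂) h3
  -- unreflect
  have h5 : F = C c * (reflect (l₂.length + l₁.length) (Ql l₂ * Ql l₁) * (X - C t)) := by
    have h6 : F = reflect n (reflect n F) := (reflect_reflect n F).symm
    rw [h6, h4]
    have hassoc : Ql l₂ * (Ql l₁ * (1 - C t * X)) = (Ql l₂ * Ql l₁) * (1 - C t * X) := by
      rw [mul_assoc]
    rw [hassoc, reflect_C_mul]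
    have hlen2 : n = (l₂.length + l₁.length) + 1 := by omega
    rw [hlen2]
    rw [reflect_mul (Ql l₂ * Ql l₁) (1 - C t * X)
      (le_trans natDegree_mul_le (add_le_add (Ql_natDegree_le l₂) (Ql_natDegree_le l₁)))
      (by
        refine le_trans (natDegree_sub_le _ _) ?_
        simp only [natDegree_one, max_le_iff]
        exact ⟨Nat.zero_le _, le_trans (natDegree_C_mul_le _ _) natDegree_X_le⟩)]
    rw [reflect_one_one_sub_C_mul_X]
  -- evaluate
  show F.eval t = 0
  rw [h5, ← mul_assoc]
  exact eval_mul_X_sub_C t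

end Aux

/-- For a splitting `f = c·(X-a₁)⋯(X-aₙ)` with `f` having coefficients in the joint
centralizer `C` of the `aₖ`'s, the substitutions `X ↦ aₖ` assemble into a ring
homomorphism `C[X] →+* Aⁿ` which kills `f` (hence factors through `C[X]/(f)`),
each component being evaluation at `aₖ`. -/
theorem substitution_ring_hom {A : Type*} [Ring A] {n : ℕ} (a : Fin n → A) (c : A)
    (f : Polynomial (Subring.centralizer (Set.range a)))
    (hsplit : f.map (Subring.subtype _) =
      C c * (List.ofFn (fun k => X - C (a k))).prod) :
    ∃ φ : Polynomial (Subring.centralizer (Set.range a)) →+* (Fin n → A),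
      (∀ g k, φ g k = eval₂ (Subring.subtype _) (a k) g) ∧ φ f = 0 := by
  have hcomm : ∀ (k : Fin n) (x : Subring.centralizer (Set.range a)),
      Commute ((Subring.subtype _) x) (a k) := by
    intro k x
    have hx := x.2
    rw [Subring.mem_centralizer_iff] at hx
    exact (hx (a k) ⟨k, rfl⟩).symm
  refine ⟨Pi.ringHom (fun k => eval₂RingHom' (Subring.subtype _) (a k) (hcomm k)), ?_, ?_⟩
  · intro g k; rfl
  · funext k
    show eval₂ (Subring.subtype _) (a k) f = 0
    rw [← eval_map]
    rw [hsplit]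
    -- rewrite the product as Pl of the list of roots
    have hprod : (List.ofFn (fun j => X - C (a j))).prod = Pl (List.ofFn a) := by
      rw [Pl]
      congr 1
      rw [List.map_ofFn]
      rfl
    rw [hprod]
    -- split the list at k
    set L := List.ofFn a with hLdef
    have hklt : (k : ℕ) < L.length := by simp [hLdef, k.isLt]
    have hsplitL : L = L.take k ++ a k :: L.drop (k + 1) := by
      conv_lhs => rw [← List.take_append_drop (k : ℕ) L]
      congr 1
      rw [List.drop_eq_getElem_cons hklt]
      congr 1
      simp [hLdef]
    rw [hsplitL]
    refine key_eval_zero c (a k) (L.take k) (L.drop (k + 1)) ?_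
    intro i b hb
    have hbL : b ∈ L := by
      rw [hsplitL]
      exact hb
    rw [hLdef] at hbL
    obtain ⟨j, rfl⟩ := List.mem_ofFn.mp hbL
    have hco : (C c * Pl (L.take k ++ a k :: L.drop (k+1))).coeff i
        = (Subring.subtype _) (f.coeff i) := by
      rw [← hsplitL, ← hprod, ← hsplit, coeff_map]
    rw [hco]
    exact hcomm j (f.coeff i)
end

section
/- In the 2×2 upper triangular matrix ring over a nonzero commutative ring K, the Vandermonde-type matrix with block rows (a₁², a₂², a₃²), (a₁, a₂, a₃), (1, 1, 1), where a₁ = [[0,0],[0,1]], a₂ = [[0,-1],[0,0]], a₃ = [[1,1],[0,0]], is not invertible (as a 6×6 matrix over K). -/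
open Matrix

/-- The `6×6` matrix over `K` obtained from the Vandermonde-type block matrix
`(aᵢ²; aᵢ; 1)` for the upper triangular pseudoroots is not invertible. -/
theorem vandermonde_not_invertible {K : Type*} [CommRing K] [Nontrivial K] :
    ¬ IsUnit (!![0, 0, 0, 0, 1, 1;
                 0, 1, 0, 0, 0, 0;
                 0, 0, 0, -1, 1, 1;
                 0, 1, 0, 0, 0, 0;
                 1, 0, 1, 0, 1, 0;
                 0, 1, 0, 1, 0, 1] : Matrix (Fin 6) (Fin 6) K) := by
  rw [Matrix.isUnit_iff_isUnit_det]
  have h : (!![0, 0, 0, 0, 1, 1;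
                 0, 1, 0, 0, 0, 0;
                 0, 0, 0, -1, 1, 1;
                 0, 1, 0, 0, 0, 0;
                 1, 0, 1, 0, 1, 0;
                 0, 1, 0, 1, 0, 1] : Matrix (Fin 6) (Fin 6) K).det = 0 := by
    apply Matrix.det_zero_of_row_eq (i := 1) (j := 3) (by decide)
    funext k
    fin_cases k <;> rfl
  rw [h]
  simp
end
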